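/- Consider a subsystem qubit stabilizer code with virtual Pauli operators X'_1, Z'_1, …, X'_n, Z'_n satisfying the standard commutation relations, with check set C = {Z'_1, …, Z'_s, X'_{s+1}, Z'_{s+1}, …, X'_{s+g}, Z'_{s+g}} for some s, g ≥ 0 with s + g ≤ n. The compatibility graph of C (edge between two distinct operators iff they commute) has the Kirby--Love property if and only if g ≥ 2. -/

import Mathlib

/-- The compatibility graph on a family of operators: an edge between two distinct
vertices iff the labeling operators commute. -/
def compatGraph {V R : Type*} [Mul R] (op : V → R) : SimpleGraph V where
  Adj u v := u ≠ v ∧ op u * op v = op v * op u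
  symm := ⟨fun _ _ h => ⟨h.1.symm, h.2.symm⟩⟩
  loopless := ⟨fun _ h => h.1 rfl⟩

/-- The Kirby--Love property: there are vertices `a, b, c, d` (with `a ≠ d` and `b ≠ c`)
such that `{a,b}` and `{a,c}` are edges but `{a,d}` and `{b,c}` are not edges. -/
def HasKirbyLove {V : Type*} (G : SimpleGraph V) : Prop :=
  ∃ a b c d : V, G.Adj a b ∧ G.Adj a c ∧ ¬ G.Adj a d ∧ ¬ G.Adj b c ∧ a ≠ d ∧ b ≠ c

/-- The check set `C = {Z'_1, …, Z'_s, X'_{s+1}, Z'_{s+1}, …, X'_{s+g}, Z'_{s+g}}` of a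
subsystem qubit stabilizer code, as a family of operators indexed by
`Fin s ⊕ (Fin g × Bool)` (with `true` labelling the `X'` checks). -/
def checkOp {R : Type*} (n s g : ℕ) (hsg : s + g ≤ n) (X' Z' : Fin n → R) :
    Fin s ⊕ (Fin g × Bool) → R
  | Sum.inl i => Z' ⟨i.1, by have h := i.2; omega⟩
  | Sum.inr (i, b) => (if b then X' else Z') ⟨s + i.1, by have h := i.2; omega⟩

/-- For a subsystem qubit stabilizer code with virtual Pauli operators `X'_j, Z'_j`
satisfying the standard (anti)commutation relations, the compatibility graph of the
check set `C = {Z'_1, …, Z'_s, X'_{s+1}, Z'_{s+1}, …, X'_{s+g}, Z'_{s+g}}` has the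
Kirby--Love property if and only if `g ≥ 2`. -/
theorem checkSet_hasKirbyLove_iff_two_gauge_qubits {R : Type*} [Ring R]
    (n s g : ℕ) (hsg : s + g ≤ n) (X' Z' : Fin n → R)
    (h2 : (2 : R) ≠ 0)
    (hXX : ∀ j k, j ≠ k → X' j * X' k = X' k * X' j)
    (hZZ : ∀ j k, j ≠ k → Z' j * Z' k = Z' k * Z' j)
    (hXZ : ∀ j k, j ≠ k → X' j * Z' k = Z' k * X' j)
    (hanti : ∀ j, X' j * Z' j = -(Z' j * X' j))
    (hXsq : ∀ j, X' j * X' j = 1)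
    (hZsq : ∀ j, Z' j * Z' j = 1) :
    HasKirbyLove (compatGraph (checkOp n s g hsg X' Z')) ↔ 2 ≤ g := by
  -- X'_m and Z'_m do not commute
  have hne : ∀ m, X' m * Z' m ≠ Z' m * X' m := by
    intro m h
    have ha := hanti m
    rw [h] at ha
    have hz : Z' m * X' m + Z' m * X' m = 0 := add_eq_zero_iff_eq_neg.mpr ha
    have hzxxz : (Z' m * X' m) * (X' m * Z' m) = 1 := by
      rw [mul_assoc, ← mul_assoc (X' m), hXsq, one_mul, hZsq]
    have := congrArg (· * (X' m * Z' m)) hz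
    simp only [add_mul, hzxxz, zero_mul] at this
    exact h2 (by rw [← one_add_one_eq_two, this])
  set op := checkOp n s g hsg X' Z' with hop
  -- characterization of non-commuting pairs
  have key : ∀ u v, op u * op v ≠ op v * op u →
      ∃ i : Fin g, (u = Sum.inr (i, true) ∧ v = Sum.inr (i, false)) ∨
        (u = Sum.inr (i, false) ∧ v = Sum.inr (i, true)) := by
    rintro (i | ⟨i, bi⟩) (j | ⟨j, bj⟩) h
    · exact absurd (by
        by_cases hij : i = j
        · subst hij; rfl
        · exact hZZ _ _ (fun hc => hij (Fin.eq_of_val_eq (by simpa using congrArg Fin.val hc)))) h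
    · exfalso; apply h
      have hne' : (⟨i.1, by have := i.2; omega⟩ : Fin n) ≠ ⟨s + j.1, by have := j.2; omega⟩ := by
        intro hc
        have := Fin.val_eq_of_eq hc
        simp at this; omega
      cases bj <;> simp only [hop, checkOp, if_true, if_false, Bool.false_eq_true]
      · exact hZZ _ _ hne'
      · exact (hXZ _ _ hne'.symm).symm
    · exfalso; apply h
      have hne' : (⟨s + i.1, by have := i.2; omega⟩ : Fin n) ≠ ⟨j.1, by have := j.2; omega⟩ := by
        intro hc
        have := Fin.val_eq_of_eq hc
        simp at this; omega
      cases bi <;> simp only [hop, checkOp, if_true, if_false, Bool.false_eq_true]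
      · exact hZZ _ _ hne'
      · exact hXZ _ _ hne'
    · by_cases hij : i = j
      · subst hij
        cases bi <;> cases bj
        · exact absurd rfl h
        · exact ⟨i, Or.inr ⟨rfl, rfl⟩⟩
        · exact ⟨i, Or.inl ⟨rfl, rfl⟩⟩
        · exact absurd rfl h
      · exfalso; apply h
        have hne' : (⟨s + i.1, by have := i.2; omega⟩ : Fin n) ≠
            ⟨s + j.1, by have := j.2; omega⟩ := by
          intro hc
          have := Fin.val_eq_of_eq hc
          simp at this
          exact hij (Fin.eq_of_val_eq this)
        cases bi <;> cases bj <;>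
          simp only [hop, checkOp, if_true, if_false, Bool.false_eq_true]
        · exact hZZ _ _ hne'
        · exact (hXZ _ _ hne'.symm).symm
        · exact hXZ _ _ hne'
        · exact hXX _ _ hne'
  constructor
  · rintro ⟨a, b, c, d, hab, hac, had, hbc, haned, hbnec⟩
    by_contra hg
    push_neg at hg
    -- non-adjacency with distinctness gives non-commutation
    have hadnc : op a * op d ≠ op d * op a := fun h => had ⟨haned, h⟩
    have hbcnc : op b * op c ≠ op c * op b := fun h => hbc ⟨hbnec, h⟩
    obtain ⟨i, hi⟩ := key a d hadnc
    obtain ⟨j, hj⟩ := key b c hbcnc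
    have hij : i = j := by
      have h1 := i.2; have h2 := j.2
      exact Fin.eq_of_val_eq (by omega)
    subst hij
    -- now a,d and b,c are both the pair {inr(i,true), inr(i,false)}
    rcases hi with ⟨ha, hd⟩ | ⟨ha, hd⟩ <;> rcases hj with ⟨hb, hc⟩ | ⟨hb, hc⟩
    · subst ha; subst hd; subst hb; subst hc; exact hadnc hac.2
    · exact hac.1 (ha.trans hc.symm)
    · exact hac.1 (ha.trans hc.symm)
    · subst ha; subst hd; subst hb; subst hc; exact hadnc hac.2
  · intro hg
    -- a = X'_{s+1}, b = X'_{s+2}, c = Z'_{s+2}, d = Z'_{s+1}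
    refine ⟨Sum.inr (⟨0, by omega⟩, true), Sum.inr (⟨1, by omega⟩, true),
      Sum.inr (⟨1, by omega⟩, false), Sum.inr (⟨0, by omega⟩, false), ?_, ?_, ?_, ?_, ?_, ?_⟩
    · refine ⟨by simp, ?_⟩
      simp only [hop, checkOp, if_true]
      exact hXX _ _ (by intro hc; have := Fin.val_eq_of_eq hc; simp at this)
    · refine ⟨by simp, ?_⟩
      simp only [hop, checkOp, if_true, Bool.false_eq_true, if_false]
      exact hXZ _ _ (by intro hc; have := Fin.val_eq_of_eq hc; simp at this)
    · rintro ⟨-, h⟩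
      simp only [hop, checkOp, if_true, Bool.false_eq_true, if_false] at h
      exact hne _ h
    · rintro ⟨-, h⟩
      simp only [hop, checkOp, if_true, Bool.false_eq_true, if_false] at h
      exact hne _ h
    · simp
    · simp
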